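/- arXiv:1207.5067 — 4 statements merged into one kernel-verified Lean document; each statement's English description precedes it below -/
import Mathlib

section
/- Let A₁, A₂, A₃ be square matrices of sizes n₁, n₂, n₃ and B₁ (n₁×n₂), B₂ (n₂×n₃), C₁ (n₁×n₃). Define the block upper-triangular matrix M = [[A₁, B₁, C₁], [0, A₂, B₂], [0, 0, A₃]]. Then for s ≥ 0 the top-right n₁×n₃ block of exp(sM) equals ∫₀ˢ exp(A₁(s−u)) C₁ exp(A₃ u) du + ∫₀ˢ ∫₀ᵘ exp(A₁(s−u)) B₁ exp(A₂(u−r)) B₂ exp(A₃ r) dr du. -/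
open Matrix MeasureTheory intervalIntegral NormedSpace

attribute [local instance] Matrix.linftyOpNormedRing Matrix.linftyOpNormedAlgebra
  Matrix.linftyOpNormedAddCommGroup Matrix.linftyOpNormedSpace

set_option linter.unusedSectionVars false

namespace VanLoanProof

variable {p q r p' q' : Type*} [Fintype p] [Fintype q] [Fintype r] [Fintype p'] [Fintype q']

/-- Matrix multiplication of rectangular real matrices, as a continuous bilinear map. -/
noncomputable def mulCLM : Matrix p q ℝ →L[ℝ] Matrix q r ℝ →L[ℝ] Matrix p r ℝ :=
  LinearMap.toContinuousLinearMap
    { toFun := fun X => LinearMap.toContinuousLinearMap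
        { toFun := fun Y => X * Y
          map_add' := fun Y Z => Matrix.mul_add X Y Z
          map_smul' := fun t Y => by simp [Matrix.mul_smul] }
      map_add' := fun X Y => by ext Z; simp [Matrix.add_mul]
      map_smul' := fun t X => by ext Z; simp [Matrix.smul_mul] }

@[simp] lemma mulCLM_apply (X : Matrix p q ℝ) (Y : Matrix q r ℝ) : mulCLM X Y = X * Y := rfl

theorem _root_.HasDerivAt.matmul {f : ℝ → Matrix p q ℝ} {g : ℝ → Matrix q r ℝ}
    {f' : Matrix p q ℝ} {g' : Matrix q r ℝ} {t : ℝ}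
    (hf : HasDerivAt f f' t) (hg : HasDerivAt g g' t) :
    HasDerivAt (fun t => f t * g t) (f' * g t + f t * g') t := by
  refine hasDerivAt_pi.2 fun i => hasDerivAt_pi.2 fun j => ?_
  have hf' := fun k => hasDerivAt_pi.1 (hasDerivAt_pi.1 hf i) k
  have hg' := fun k => hasDerivAt_pi.1 (hasDerivAt_pi.1 hg k) j
  have := HasDerivAt.fun_sum (u := Finset.univ) fun k _ => (hf' k).mul (hg' k)
  simpa [Matrix.mul_apply, Finset.sum_add_distrib] using this


section exp
variable [DecidableEq p]

lemma exp_smul_add (A : Matrix p p ℝ) (x y : ℝ) :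
    exp (x • A) * exp (y • A) = exp ((x + y) • A) := by
  rw [add_smul, Matrix.exp_add_of_commute _ _ (((Commute.refl A).smul_left x).smul_right y)]

lemma exp_smul_neg_cancel (A : Matrix p p ℝ) (x : ℝ) :
    exp (x • A) * exp ((-x) • A) = 1 := by
  rw [exp_smul_add, add_neg_cancel, zero_smul, NormedSpace.exp_zero]

lemma exp_mul_exp_assoc (A : Matrix p p ℝ) (x y : ℝ) (X : Matrix p q ℝ) :
    exp (x • A) * (exp (y • A) * X) = exp ((x + y) • A) * X := by
  rw [← Matrix.mul_assoc, exp_smul_add]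

lemma continuous_exp_smul (A : Matrix p p ℝ) :
    Continuous fun t : ℝ => exp (t • A) :=
  NormedSpace.exp_continuous.comp (continuous_id.smul continuous_const)

lemma hasDerivAt_exp_smul (A : Matrix p p ℝ) (t : ℝ) :
    HasDerivAt (fun t : ℝ => exp (t • A)) (A * exp (t • A)) t :=
  hasDerivAt_exp_smul_const' A t

end exp


section blocks

noncomputable def fbCLM₁₁ : Matrix p q ℝ →L[ℝ] Matrix (p ⊕ p') (q ⊕ q') ℝ :=
  LinearMap.toContinuousLinearMap
    { toFun := fun X => fromBlocks X 0 0 0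
      map_add' := fun X Y => by ext (i | i) (j | j) <;> simp
      map_smul' := fun t X => by ext (i | i) (j | j) <;> simp }

noncomputable def fbCLM₁₂ : Matrix p q' ℝ →L[ℝ] Matrix (p ⊕ p') (q ⊕ q') ℝ :=
  LinearMap.toContinuousLinearMap
    { toFun := fun X => fromBlocks 0 X 0 0
      map_add' := fun X Y => by ext (i | i) (j | j) <;> simp
      map_smul' := fun t X => by ext (i | i) (j | j) <;> simp }

noncomputable def fbCLM₂₁ : Matrix p' q ℝ →L[ℝ] Matrix (p ⊕ p') (q ⊕ q') ℝ :=
  LinearMap.toContinuousLinearMap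
    { toFun := fun X => fromBlocks 0 0 X 0
      map_add' := fun X Y => by ext (i | i) (j | j) <;> simp
      map_smul' := fun t X => by ext (i | i) (j | j) <;> simp }

noncomputable def fbCLM₂₂ : Matrix p' q' ℝ →L[ℝ] Matrix (p ⊕ p') (q ⊕ q') ℝ :=
  LinearMap.toContinuousLinearMap
    { toFun := fun X => fromBlocks 0 0 0 X
      map_add' := fun X Y => by ext (i | i) (j | j) <;> simp
      map_smul' := fun t X => by ext (i | i) (j | j) <;> simp }

lemma fromBlocks_eq_sum (A : Matrix p q ℝ) (B : Matrix p q' ℝ) (C : Matrix p' q ℝ)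
    (D : Matrix p' q' ℝ) :
    fromBlocks A B C D = fbCLM₁₁ A + fbCLM₁₂ B + fbCLM₂₁ C + fbCLM₂₂ D := by
  ext (i | i) (j | j) <;>
    simp [fbCLM₁₁, fbCLM₁₂, fbCLM₂₁, fbCLM₂₂]

set_option maxHeartbeats 1000000 in
theorem hasDerivAt_fromBlocks {f : ℝ → Matrix p q ℝ} {g : ℝ → Matrix p q' ℝ}
    {h : ℝ → Matrix p' q ℝ} {k : ℝ → Matrix p' q' ℝ}
    {f' : Matrix p q ℝ} {g' : Matrix p q' ℝ} {h' : Matrix p' q ℝ} {k' : Matrix p' q' ℝ} {t : ℝ}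
    (hf : HasDerivAt f f' t) (hg : HasDerivAt g g' t) (hh : HasDerivAt h h' t)
    (hk : HasDerivAt k k' t) :
    HasDerivAt (fun t => fromBlocks (f t) (g t) (h t) (k t)) (fromBlocks f' g' h' k') t := by
  simp only [fromBlocks_eq_sum]
  have h1 : HasDerivAt (⇑(fbCLM₁₁ (p' := p') (q' := q')) ∘ f) (fbCLM₁₁ f') t :=
    (fbCLM₁₁ (p' := p') (q' := q')).hasFDerivAt.comp_hasDerivAt t hf
  have h2 : HasDerivAt (⇑(fbCLM₁₂ (p' := p') (q := q)) ∘ g) (fbCLM₁₂ g') t :=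
    (fbCLM₁₂ (p' := p') (q := q)).hasFDerivAt.comp_hasDerivAt t hg
  have h3 : HasDerivAt (⇑(fbCLM₂₁ (p := p) (q' := q')) ∘ h) (fbCLM₂₁ h') t :=
    (fbCLM₂₁ (p := p) (q' := q')).hasFDerivAt.comp_hasDerivAt t hh
  have h4 : HasDerivAt (⇑(fbCLM₂₂ (p := p) (q := q)) ∘ k) (fbCLM₂₂ k') t :=
    (fbCLM₂₂ (p := p) (q := q)).hasFDerivAt.comp_hasDerivAt t hk
  exact ((h1.add h2).add h3).add h4

noncomputable def fcCLM₁ : Matrix p q ℝ →L[ℝ] Matrix p (q ⊕ q') ℝ :=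
  LinearMap.toContinuousLinearMap
    { toFun := fun X => fromCols X 0
      map_add' := fun X Y => by ext i (j | j) <;> simp
      map_smul' := fun t X => by ext i (j | j) <;> simp }

noncomputable def fcCLM₂ : Matrix p q' ℝ →L[ℝ] Matrix p (q ⊕ q') ℝ :=
  LinearMap.toContinuousLinearMap
    { toFun := fun X => fromCols 0 X
      map_add' := fun X Y => by ext i (j | j) <;> simp
      map_smul' := fun t X => by ext i (j | j) <;> simp }

lemma fromCols_eq_sum (A : Matrix p q ℝ) (B : Matrix p q' ℝ) :
    fromCols A B = fcCLM₁ A + fcCLM₂ B := by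
  ext i (j | j) <;> simp [fcCLM₁, fcCLM₂]

theorem hasDerivAt_fromCols {f : ℝ → Matrix p q ℝ} {g : ℝ → Matrix p q' ℝ}
    {f' : Matrix p q ℝ} {g' : Matrix p q' ℝ} {t : ℝ}
    (hf : HasDerivAt f f' t) (hg : HasDerivAt g g' t) :
    HasDerivAt (fun t => fromCols (f t) (g t)) (fromCols f' g') t := by
  simp only [fromCols_eq_sum]
  have h1 : HasDerivAt (⇑(fcCLM₁ (q' := q')) ∘ f) (fcCLM₁ f') t :=
    (fcCLM₁ (q' := q')).hasFDerivAt.comp_hasDerivAt t hf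
  have h2 : HasDerivAt (⇑(fcCLM₂ (q := q)) ∘ g) (fcCLM₂ g') t :=
    (fcCLM₂ (q := q)).hasFDerivAt.comp_hasDerivAt t hg
  exact h1.add h2

lemma fromCols_add (A C : Matrix p q ℝ) (B D : Matrix p q' ℝ) :
    fromCols A B + fromCols C D = fromCols (A + C) (B + D) := by
  ext i (j | j) <;> simp

end blocks


section integrals
variable [DecidableEq p] [DecidableEq q] [DecidableEq r]

noncomputable def entryCLM (i : p) (j : q) : Matrix p q ℝ →L[ℝ] ℝ :=
  LinearMap.toContinuousLinearMap (Matrix.entryLinearMap ℝ ℝ i j)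

@[simp] lemma entryCLM_apply (i : p) (j : q) (X : Matrix p q ℝ) : entryCLM i j X = X i j := rfl

lemma integral_entry {f : ℝ → Matrix p q ℝ} (hf : Continuous f) (a b : ℝ) (i : p) (j : q) :
    (∫ t in a..b, f t) i j = ∫ t in a..b, f t i j := by
  have := (entryCLM i j).intervalIntegral_comp_comm (hf.intervalIntegrable (μ := volume) a b)
  exact this.symm

lemma mul_integral {f : ℝ → Matrix q r ℝ} (hf : Continuous f) (X : Matrix p q ℝ) (a b : ℝ) :
    X * ∫ t in a..b, f t = ∫ t in a..b, X * f t := by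
  have := (mulCLM X).intervalIntegral_comp_comm (hf.intervalIntegrable (μ := volume) a b)
  exact this.symm

end integrals

section Y
variable [DecidableEq p] [DecidableEq q] [DecidableEq r]
variable (A : Matrix p p ℝ) (D : Matrix q q ℝ) (B : Matrix p q ℝ)

/-- The solution of the inhomogeneous linear ODE `Y' = A Y + B exp(tD)`, `Y 0 = 0`. -/
noncomputable def Yfun : ℝ → Matrix p q ℝ := fun u =>
  exp (u • A) * ∫ r in (0:ℝ)..u, exp ((-r) • A) * B * exp (r • D)

lemma continuous_Yfun_integrand :
    Continuous fun r : ℝ => exp ((-r) • A) * B * exp (r • D) :=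
  (((continuous_exp_smul A).comp continuous_neg).matrix_mul continuous_const).matrix_mul
    (continuous_exp_smul D)

lemma continuous_Yfun : Continuous (Yfun A D B) :=
  (continuous_exp_smul A).matrix_mul
    (intervalIntegral.continuous_primitive
      (fun a b => (continuous_Yfun_integrand A D B).intervalIntegrable a b) 0)

lemma hasDerivAt_Yfun (u : ℝ) :
    HasDerivAt (Yfun A D B) (A * Yfun A D B u + B * exp (u • D)) u := by
  have hW : HasDerivAt (fun u : ℝ => ∫ r in (0:ℝ)..u, exp ((-r) • A) * B * exp (r • D))
      (exp ((-u) • A) * B * exp (u • D)) u :=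
    ((continuous_Yfun_integrand A D B).integral_hasStrictDerivAt 0 u).hasDerivAt
  have h := (hasDerivAt_exp_smul A u).matmul hW
  convert h using 1
  · rfl
  rw [Yfun, ← Matrix.mul_assoc]
  congr 1
  rw [← Matrix.mul_assoc, ← Matrix.mul_assoc, exp_smul_neg_cancel, Matrix.one_mul]

end Y

section Z
variable [DecidableEq p] [DecidableEq q] [DecidableEq r]
variable (A : Matrix p p ℝ) (D : Matrix q q ℝ) (F : Matrix r r ℝ)
variable (B : Matrix p q ℝ) (B' : Matrix q r ℝ) (C : Matrix p r ℝ)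

noncomputable def Zfun : ℝ → Matrix p r ℝ := fun s =>
  exp (s • A) * ∫ u in (0:ℝ)..s,
    exp ((-u) • A) * (C * exp (u • F) + B * Yfun D F B' u)

lemma continuous_Zfun_integrand :
    Continuous fun u : ℝ => exp ((-u) • A) * (C * exp (u • F) + B * Yfun D F B' u) :=
  ((continuous_exp_smul A).comp continuous_neg).matrix_mul
    ((continuous_const.matrix_mul (continuous_exp_smul F)).add
      (continuous_const.matrix_mul (continuous_Yfun D F B')))

lemma hasDerivAt_Zfun (t : ℝ) :
    HasDerivAt (Zfun A D F B B' C)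
      (A * Zfun A D F B B' C t + (B * Yfun D F B' t + C * exp (t • F))) t := by
  have hW : HasDerivAt (fun s : ℝ => ∫ u in (0:ℝ)..s,
      exp ((-u) • A) * (C * exp (u • F) + B * Yfun D F B' u))
      (exp ((-t) • A) * (C * exp (t • F) + B * Yfun D F B' t)) t :=
    ((continuous_Zfun_integrand A D F B B' C).integral_hasStrictDerivAt 0 t).hasDerivAt
  have h := (hasDerivAt_exp_smul A t).matmul hW
  convert h using 1
  · rfl
  rw [Zfun, ← Matrix.mul_assoc]
  congr 1
  rw [← Matrix.mul_assoc, exp_smul_neg_cancel, Matrix.one_mul, add_comm]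

end Z

end VanLoanProof


open VanLoanProof NormedSpace

/-- Van Loan's block formula (3×3 case): the top-right block of the exponential of a
3×3 block upper-triangular matrix. -/
theorem vanLoan_three_blocks_top_right {n₁ n₂ n₃ : ℕ}
    (A₁ : Matrix (Fin n₁) (Fin n₁) ℝ) (A₂ : Matrix (Fin n₂) (Fin n₂) ℝ)
    (A₃ : Matrix (Fin n₃) (Fin n₃) ℝ)
    (B₁ : Matrix (Fin n₁) (Fin n₂) ℝ) (B₂ : Matrix (Fin n₂) (Fin n₃) ℝ)
    (C₁ : Matrix (Fin n₁) (Fin n₃) ℝ) (s : ℝ) (hs : 0 ≤ s)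
    (M : Matrix (Fin n₁ ⊕ (Fin n₂ ⊕ Fin n₃)) (Fin n₁ ⊕ (Fin n₂ ⊕ Fin n₃)) ℝ)
    (hM : M = Matrix.fromBlocks A₁ (Matrix.fromCols B₁ C₁) 0
        (Matrix.fromBlocks A₂ B₂ 0 A₃)) :
    ∀ (i : Fin n₁) (k : Fin n₃),
      NormedSpace.exp (s • M) (Sum.inl i) (Sum.inr (Sum.inr k)) =
        (∫ u in (0:ℝ)..s,
          (NormedSpace.exp ((s - u) • A₁) * C₁ * NormedSpace.exp (u • A₃)) i k) +
        ∫ u in (0:ℝ)..s, ∫ r in (0:ℝ)..u,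
          (NormedSpace.exp ((s - u) • A₁) * B₁ * NormedSpace.exp ((u - r) • A₂) * B₂ *
            NormedSpace.exp (r • A₃)) i k := by
  intro i k
  set Y₁ := VanLoanProof.Yfun A₁ A₂ B₁ with hY₁
  set Y₂ := VanLoanProof.Yfun A₂ A₃ B₂ with hY₂
  set Z := VanLoanProof.Zfun A₁ A₂ A₃ B₁ B₂ C₁ with hZ
  set G : ℝ → Matrix (Fin n₁ ⊕ (Fin n₂ ⊕ Fin n₃)) (Fin n₁ ⊕ (Fin n₂ ⊕ Fin n₃)) ℝ :=
    fun t => Matrix.fromBlocks (exp (t • A₁)) (Matrix.fromCols (Y₁ t) (Z t)) 0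
      (Matrix.fromBlocks (exp (t • A₂)) (Y₂ t) 0 (exp (t • A₃))) with hG
  have hGderiv : ∀ t, HasDerivAt G (M * G t) t := by
    intro t
    have hb := VanLoanProof.hasDerivAt_fromBlocks
      (VanLoanProof.hasDerivAt_exp_smul A₁ t)
      (VanLoanProof.hasDerivAt_fromCols (VanLoanProof.hasDerivAt_Yfun A₁ A₂ B₁ t)
        (VanLoanProof.hasDerivAt_Zfun A₁ A₂ A₃ B₁ B₂ C₁ t))
      (hasDerivAt_const t (0 : Matrix (Fin n₂ ⊕ Fin n₃) (Fin n₁) ℝ))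
      (VanLoanProof.hasDerivAt_fromBlocks (VanLoanProof.hasDerivAt_exp_smul A₂ t)
        (VanLoanProof.hasDerivAt_Yfun A₂ A₃ B₂ t)
        (hasDerivAt_const t (0 : Matrix (Fin n₃) (Fin n₂) ℝ))
        (VanLoanProof.hasDerivAt_exp_smul A₃ t))
    rw [hG]
    convert hb using 1
    rw [hM, Matrix.fromBlocks_multiply, Matrix.mul_fromCols,
      Matrix.fromCols_mul_fromBlocks, Matrix.fromBlocks_multiply,
      VanLoanProof.fromCols_add]
    simp [hY₁, hY₂, hZ]
  have hG0 : G 0 = 1 := by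
    simp [hG, hY₁, hY₂, hZ, VanLoanProof.Yfun, VanLoanProof.Zfun,
      intervalIntegral.integral_same, Matrix.mul_zero, Matrix.fromCols_zero,
      Matrix.fromBlocks_one, zero_smul, NormedSpace.exp_zero]
  have hKderiv : ∀ t : ℝ, HasDerivAt (fun t : ℝ => exp (t • (-M)) * G t) 0 t := by
    intro t
    have h := (VanLoanProof.hasDerivAt_exp_smul (-M) t).matmul (hGderiv t)
    convert h using 1
    have hc : Commute (exp (t • (-M))) M := (((Commute.refl M).neg_left).smul_left t).exp_left
    rw [Matrix.neg_mul, ← hc.eq, Matrix.neg_mul, Matrix.mul_assoc, neg_add_cancel]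
  have hKconst : ∀ t : ℝ, exp (t • (-M)) * G t = 1 := by
    intro t
    have hh := is_const_of_deriv_eq_zero (f := fun t : ℝ => exp (t • (-M)) * G t)
      (fun x => (hKderiv x).differentiableAt) (fun x => (hKderiv x).deriv) t 0
    simpa [hG0, zero_smul, NormedSpace.exp_zero] using hh
  have hEG : exp (s • M) = G s := by
    have h1 : exp (s • M) * exp (s • (-M)) = 1 := by
      rw [show s • (-M) = (-s) • M by rw [smul_neg, neg_smul],
        VanLoanProof.exp_smul_neg_cancel]
    calc exp (s • M) = exp (s • M) * (exp (s • (-M)) * G s) := by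
          rw [hKconst s, Matrix.mul_one]
      _ = (exp (s • M) * exp (s • (-M))) * G s := by rw [Matrix.mul_assoc]
      _ = G s := by rw [h1, Matrix.one_mul]
  rw [hEG]
  have hblock : G s (Sum.inl i) (Sum.inr (Sum.inr k)) = Z s i k := by
    simp [hG]
  rw [hblock]
  -- continuity facts
  have contY₂ : Continuous Y₂ := VanLoanProof.continuous_Yfun A₂ A₃ B₂
  have contg := VanLoanProof.continuous_Zfun_integrand A₁ A₂ A₃ B₁ B₂ C₁
  have ce1 : Continuous fun u : ℝ => exp ((s - u) • A₁) :=
    (VanLoanProof.continuous_exp_smul A₁).comp (continuous_const.sub continuous_id)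
  have c1 : Continuous fun u : ℝ => exp ((s - u) • A₁) * C₁ * exp (u • A₃) :=
    (ce1.matrix_mul continuous_const).matrix_mul (VanLoanProof.continuous_exp_smul A₃)
  have c2 : Continuous fun u : ℝ => exp ((s - u) • A₁) * B₁ * Y₂ u :=
    (ce1.matrix_mul continuous_const).matrix_mul contY₂
  -- split Z s at the matrix level
  have hsplit : Z s = (∫ u in (0:ℝ)..s, exp ((s - u) • A₁) * C₁ * exp (u • A₃))
      + ∫ u in (0:ℝ)..s, exp ((s - u) • A₁) * B₁ * Y₂ u := by
    rw [hZ]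
    show exp (s • A₁) * (∫ u in (0:ℝ)..s,
        exp ((-u) • A₁) * (C₁ * exp (u • A₃) + B₁ * Y₂ u)) = _
    rw [VanLoanProof.mul_integral contg (exp (s • A₁)) 0 s,
      ← intervalIntegral.integral_add (c1.intervalIntegrable (μ := volume) 0 s)
        (c2.intervalIntegrable (μ := volume) 0 s)]
    apply intervalIntegral.integral_congr
    intro u hu
    show exp (s • A₁) * (exp ((-u) • A₁) * (C₁ * exp (u • A₃) + B₁ * Y₂ u)) = _
    rw [VanLoanProof.exp_mul_exp_assoc, ← sub_eq_add_neg, Matrix.mul_add,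
      ← Matrix.mul_assoc, ← Matrix.mul_assoc]
  rw [hsplit, Matrix.add_apply, VanLoanProof.integral_entry c1 0 s i k,
    VanLoanProof.integral_entry c2 0 s i k]
  congr 1
  apply intervalIntegral.integral_congr
  intro u hu
  have cinner : Continuous fun r : ℝ =>
      exp ((s - u) • A₁) * B₁ * exp ((u - r) • A₂) * B₂ * exp (r • A₃) :=
    (((continuous_const.matrix_mul ((VanLoanProof.continuous_exp_smul A₂).comp
      (continuous_const.sub continuous_id))).matrix_mul
      continuous_const).matrix_mul (VanLoanProof.continuous_exp_smul A₃))
  have hmat : exp ((s - u) • A₁) * B₁ * Y₂ u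
      = ∫ r in (0:ℝ)..u,
          exp ((s - u) • A₁) * B₁ * exp ((u - r) • A₂) * B₂ * exp (r • A₃) := by
    rw [hY₂]
    show exp ((s - u) • A₁) * B₁ * (exp (u • A₂) * ∫ r in (0:ℝ)..u,
        exp ((-r) • A₂) * B₂ * exp (r • A₃)) = _
    rw [← Matrix.mul_assoc,
      VanLoanProof.mul_integral (VanLoanProof.continuous_Yfun_integrand A₂ A₃ B₂) _ 0 u]
    apply intervalIntegral.integral_congr
    intro r hr
    simp only [Matrix.mul_assoc]
    rw [VanLoanProof.exp_mul_exp_assoc, ← sub_eq_add_neg]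
  show (exp ((s - u) • A₁) * B₁ * Y₂ u) i k = _
  rw [hmat, VanLoanProof.integral_entry cinner 0 u i k]
end

section
/- Let A be a d×d real matrix, D a symmetric d×d matrix, and define the 2d×2d block matrix M = [[A, D], [0, −Aᵀ]]. Write exp(tM) = [[F(t), H(t)], [0, exp(−Aᵀ t)]]. Then F(t) = exp(At) and P(t) := H(t) F(t)ᵀ satisfies the Lyapunov differential equation P'(t) = A P(t) + P(t) Aᵀ + D with P(0) = 0. -/
open Matrix

section LyapunovAux

open NormedSpace

attribute [local instance] Matrix.linftyOpNormedRing Matrix.linftyOpNormedAlgebra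

variable {n : Type*} [Fintype n] [DecidableEq n]

private lemma entryD {f : ℝ → Matrix n n ℝ} {f' : Matrix n n ℝ} {t : ℝ}
    (h : HasDerivAt f f' t) (i j : n) : HasDerivAt (fun s => f s i j) (f' i j) t := by
  have hL := (LinearMap.toContinuousLinearMap
    { toFun := fun X : Matrix n n ℝ => X i j
      map_add' := fun _ _ => rfl
      map_smul' := fun (c : ℝ) X => Matrix.smul_apply c X i j }).hasFDerivAt (x := f t)
  exact hL.comp_hasDerivAt t h

private lemma expDR (X : Matrix n n ℝ) (t : ℝ) :
    HasDerivAt (fun s : ℝ => exp (s • X)) (exp (t • X) * X) t :=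
  hasDerivAt_exp_smul_const X t

private lemma expDL (X : Matrix n n ℝ) (t : ℝ) :
    HasDerivAt (fun s : ℝ => exp (s • X)) (X * exp (t • X)) t :=
  hasDerivAt_exp_smul_const' X t

private lemma expNegMul (X : Matrix n n ℝ) : exp (-X) * exp X = 1 := by
  rw [← Matrix.exp_add_of_commute _ _ (Commute.neg_left (Commute.refl X)), neg_add_cancel, exp_zero]

private lemma expComm (X : Matrix n n ℝ) (t : ℝ) :
    X * exp (t • X) = exp (t • X) * X :=
  (((Commute.refl X).smul_right t).exp_right).eq

private lemma lyapunov_master {d : ℕ} (A D : Matrix (Fin d) (Fin d) ℝ)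
    (hD : Dᵀ = D)
    (M : Matrix (Fin d ⊕ Fin d) (Fin d ⊕ Fin d) ℝ)
    (hM : M = Matrix.fromBlocks A D 0 (-Aᵀ))
    (F H P : ℝ → Matrix (Fin d) (Fin d) ℝ)
    (hF : ∀ t, F t = Matrix.of fun i j => exp (t • M) (Sum.inl i) (Sum.inl j))
    (hH : ∀ t, H t = Matrix.of fun i j => exp (t • M) (Sum.inl i) (Sum.inr j))
    (hP : ∀ t, P t = H t * (F t)ᵀ) :
    (∀ t, F t = exp (t • A)) ∧
    P 0 = 0 ∧
    (∀ t i j, HasDerivAt (fun s => P s i j) ((A * P t + P t * Aᵀ + D) i j) t) := by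
  classical
  set W : ℝ → Matrix (Fin d) (Fin d) ℝ :=
    fun t => Matrix.of fun i j => exp (t • M) (Sum.inr i) (Sum.inr j) with hW
  -- initial values
  have hF0 : F 0 = 1 := by
    rw [hF]; ext i j
    simp [zero_smul, exp_zero, Matrix.one_apply]
  have hH0 : H 0 = 0 := by
    rw [hH]; ext i j
    simp [zero_smul, exp_zero, Matrix.one_apply]
  have hW0 : W 0 = 1 := by
    rw [hW]; ext i j
    simp [zero_smul, exp_zero, Matrix.one_apply]
  -- entrywise derivative of F (from the right derivative formula)
  have hFd : ∀ t i j, HasDerivAt (fun s => F s i j) ((F t * A) i j) t := by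
    intro t i j
    have h0 := entryD (expDR M t) (Sum.inl i) (Sum.inl j)
    have hfun : (fun s : ℝ => exp (s • M) (Sum.inl i) (Sum.inl j)) = fun s => F s i j := by
      funext s; rw [hF s]; rfl
    have hval : (exp (t • M) * M) (Sum.inl i) (Sum.inl j) = (F t * A) i j := by
      have hgen : ∀ EE : Matrix (Fin d ⊕ Fin d) (Fin d ⊕ Fin d) ℝ,
          (EE * M) (Sum.inl i) (Sum.inl j)
            = ∑ k, EE (Sum.inl i) (Sum.inl k) * A k j := by
        intro EE
        rw [hM, Matrix.mul_apply, Fintype.sum_sum_type]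
        simp
      rw [hgen, Matrix.mul_apply]
      simp [hF t]
    rw [hfun, hval] at h0
    exact h0
  -- entrywise derivative of H (from the left derivative formula)
  have hHd : ∀ t i j, HasDerivAt (fun s => H s i j) ((A * H t + D * W t) i j) t := by
    intro t i j
    have h0 := entryD (expDL M t) (Sum.inl i) (Sum.inr j)
    have hfun : (fun s : ℝ => exp (s • M) (Sum.inl i) (Sum.inr j)) = fun s => H s i j := by
      funext s; rw [hH s]; rfl
    have hval : (M * exp (t • M)) (Sum.inl i) (Sum.inr j) = (A * H t + D * W t) i j := by
      have hgen : ∀ EE : Matrix (Fin d ⊕ Fin d) (Fin d ⊕ Fin d) ℝ,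
          (M * EE) (Sum.inl i) (Sum.inr j)
            = (∑ k, A i k * EE (Sum.inl k) (Sum.inr j))
              + ∑ k, D i k * EE (Sum.inr k) (Sum.inr j) := by
        intro EE
        rw [hM, Matrix.mul_apply, Fintype.sum_sum_type]
        simp
      rw [hgen, Matrix.add_apply, Matrix.mul_apply, Matrix.mul_apply]
      simp [hH t, hW]
    rw [hfun, hval] at h0
    exact h0
  -- entrywise derivative of W (from the left derivative formula)
  have hWd : ∀ t i j, HasDerivAt (fun s => W s i j) (((-Aᵀ) * W t) i j) t := by
    intro t i j
    have h0 := entryD (expDL M t) (Sum.inr i) (Sum.inr j)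
    have hfun : (fun s : ℝ => exp (s • M) (Sum.inr i) (Sum.inr j)) = fun s => W s i j := by
      funext s; rw [hW]; rfl
    have hval : (M * exp (t • M)) (Sum.inr i) (Sum.inr j) = ((-Aᵀ) * W t) i j := by
      have hgen : ∀ EE : Matrix (Fin d ⊕ Fin d) (Fin d ⊕ Fin d) ℝ,
          (M * EE) (Sum.inr i) (Sum.inr j)
            = ∑ k, (-Aᵀ) i k * EE (Sum.inr k) (Sum.inr j) := by
        intro EE
        rw [hM, Matrix.mul_apply, Fintype.sum_sum_type]
        simp
      rw [hgen, Matrix.mul_apply]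
      simp [hW]
    rw [hfun, hval] at h0
    exact h0
  -- F t = exp (t • A)
  set X : ℝ → Matrix (Fin d) (Fin d) ℝ := fun s => exp (s • (-A)) with hX
  have hXd : ∀ t i j, HasDerivAt (fun s => X s i j) ((X t * (-A)) i j) t :=
    fun t i j => entryD (expDR (-A) t) i j
  have hFX : ∀ s, F s * X s = 1 := by
    have hzero : ∀ u : ℝ, F u * A * X u + F u * (X u * (-A)) = 0 := by
      intro u
      have hc : (-A) * X u = X u * (-A) := expComm (-A) u
      rw [← hc, neg_mul, mul_neg, mul_assoc]
      exact add_neg_cancel _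
    intro s
    ext i j
    have hq : ∀ u : ℝ, HasDerivAt (fun v => (F v * X v) i j)
        ((F u * A * X u + F u * (X u * (-A))) i j) u := by
      intro u
      have h1 : HasDerivAt (fun v => ∑ k, F v i k * X v k j)
          (∑ k, ((F u * A) i k * X u k j + F u i k * (X u * (-A)) k j)) u :=
        HasDerivAt.fun_sum fun k _ => (hFd u i k).mul (hXd u k j)
      have hfun : (fun v => (F v * X v) i j) = fun v => ∑ k, F v i k * X v k j := by
        funext v; rw [Matrix.mul_apply]
      have hval : (∑ k, ((F u * A) i k * X u k j + F u i k * (X u * (-A)) k j))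
          = (F u * A * X u + F u * (X u * (-A))) i j := by
        rw [Finset.sum_add_distrib, Matrix.add_apply, Matrix.mul_apply, Matrix.mul_apply]
      rw [hfun, ← hval]
      exact h1
    have hq0 : ∀ u : ℝ, HasDerivAt (fun v => (F v * X v) i j) 0 u := by
      intro u; have := hq u; rw [hzero u] at this; simpa using this
    have hconst : (F s * X s) i j = (F 0 * X 0) i j :=
      is_const_of_deriv_eq_zero (fun u => (hq0 u).differentiableAt)
        (fun u => (hq0 u).deriv) s 0
    rw [hconst, hF0, one_mul, hX]
    simp [zero_smul, exp_zero]
  have hF1 : ∀ s, F s = exp (s • A) := by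
    intro s
    have hXinv : X s * exp (s • A) = 1 := by
      have h := expNegMul (s • A)
      rw [← smul_neg] at h
      exact h
    calc F s = F s * (X s * exp (s • A)) := by rw [hXinv, mul_one]
      _ = F s * X s * exp (s • A) := by rw [mul_assoc]
      _ = exp (s • A) := by rw [hFX, one_mul]
  -- W s is a right inverse of Y s = exp (s • Aᵀ)
  set Y : ℝ → Matrix (Fin d) (Fin d) ℝ := fun s => exp (s • Aᵀ) with hY
  have hYd : ∀ t i j, HasDerivAt (fun s => Y s i j) ((Y t * Aᵀ) i j) t :=
    fun t i j => entryD (expDR Aᵀ t) i j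
  have hYW : ∀ s, Y s * W s = 1 := by
    have hzero : ∀ u : ℝ, Y u * Aᵀ * W u + Y u * ((-Aᵀ) * W u) = 0 := by
      intro u
      rw [neg_mul, mul_neg, mul_assoc]
      exact add_neg_cancel _
    intro s
    ext i j
    have hq : ∀ u : ℝ, HasDerivAt (fun v => (Y v * W v) i j)
        ((Y u * Aᵀ * W u + Y u * ((-Aᵀ) * W u)) i j) u := by
      intro u
      have h1 : HasDerivAt (fun v => ∑ k, Y v i k * W v k j)
          (∑ k, ((Y u * Aᵀ) i k * W u k j + Y u i k * ((-Aᵀ) * W u) k j)) u :=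
        HasDerivAt.fun_sum fun k _ => (hYd u i k).mul (hWd u k j)
      have hfun : (fun v => (Y v * W v) i j) = fun v => ∑ k, Y v i k * W v k j := by
        funext v; rw [Matrix.mul_apply]
      have hval : (∑ k, ((Y u * Aᵀ) i k * W u k j + Y u i k * ((-Aᵀ) * W u) k j))
          = (Y u * Aᵀ * W u + Y u * ((-Aᵀ) * W u)) i j := by
        rw [Finset.sum_add_distrib, Matrix.add_apply, Matrix.mul_apply, Matrix.mul_apply]
      rw [hfun, ← hval]
      exact h1
    have hq0 : ∀ u : ℝ, HasDerivAt (fun v => (Y v * W v) i j) 0 u := by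
      intro u; have := hq u; rw [hzero u] at this; simpa using this
    have hconst : (Y s * W s) i j = (Y 0 * W 0) i j :=
      is_const_of_deriv_eq_zero (fun u => (hq0 u).differentiableAt)
        (fun u => (hq0 u).deriv) s 0
    rw [hconst, hW0, mul_one, hY]
    simp [zero_smul, exp_zero]
  have hWY : ∀ s, W s * Y s = 1 := fun s => mul_eq_one_comm.mp (hYW s)
  -- transpose of F
  have hFt : ∀ t, (F t)ᵀ = Y t := by
    intro t
    rw [hF1 t, hY]
    have h := (Matrix.exp_transpose (t • A)).symm
    rw [Matrix.transpose_smul] at h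
    exact h
  refine ⟨hF1, ?_, ?_⟩
  · rw [hP, hH0, zero_mul]
  · intro t i j
    have hsum : HasDerivAt (fun s => ∑ k, H s i k * F s j k)
        (∑ k, ((A * H t + D * W t) i k * F t j k + H t i k * (F t * A) j k)) t :=
      HasDerivAt.fun_sum fun k _ => (hHd t i k).mul (hFd t j k)
    have hfun : (fun s => P s i j) = fun s => ∑ k, H s i k * F s j k := by
      funext s
      rw [hP s, Matrix.mul_apply]
      simp [Matrix.transpose_apply]
    have hval : (∑ k, ((A * H t + D * W t) i k * F t j k + H t i k * (F t * A) j k))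
        = (A * P t + P t * Aᵀ + D) i j := by
      have h1 : ∑ k, (A * H t + D * W t) i k * F t j k
          = ((A * H t + D * W t) * (F t)ᵀ) i j := by
        rw [Matrix.mul_apply]; simp [Matrix.transpose_apply]
      have h2 : ∑ k, H t i k * (F t * A) j k = (H t * (F t * A)ᵀ) i j := by
        rw [Matrix.mul_apply]; simp [Matrix.transpose_apply]
      have hAY : Aᵀ * Y t = Y t * Aᵀ :=
        (((Commute.refl Aᵀ).smul_right t).exp_right).eq
      have hmat : (A * H t + D * W t) * (F t)ᵀ + H t * (F t * A)ᵀ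
          = A * P t + P t * Aᵀ + D := by
        rw [Matrix.transpose_mul, hFt t, hP t, hFt t]
        calc (A * H t + D * W t) * Y t + H t * (Aᵀ * Y t)
            = A * (H t * Y t) + D * (W t * Y t) + H t * (Y t * Aᵀ) := by
              rw [Matrix.add_mul, mul_assoc, mul_assoc, hAY]
          _ = A * (H t * Y t) + H t * Y t * Aᵀ + D := by
              rw [hWY t, mul_one, mul_assoc]; abel
      rw [Finset.sum_add_distrib, h1, h2, ← Matrix.add_apply, hmat]
    rw [hfun, ← hval]
    exact hsum

end LyapunovAux

/-- For `M = [[A, D], [0, −Aᵀ]]` with `D` symmetric, writing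
`exp(tM) = [[F(t), H(t)], [0, exp(−Aᵀt)]]`, one has `F(t) = exp(At)`, and
`P(t) = H(t) F(t)ᵀ` solves the Lyapunov equation `P' = A P + P Aᵀ + D`, `P(0) = 0`. -/
theorem lyapunov_via_block_exp {d : ℕ} (A D : Matrix (Fin d) (Fin d) ℝ)
    (hD : Dᵀ = D)
    (M : Matrix (Fin d ⊕ Fin d) (Fin d ⊕ Fin d) ℝ)
    (hM : M = Matrix.fromBlocks A D 0 (-Aᵀ))
    (F H P : ℝ → Matrix (Fin d) (Fin d) ℝ)
    (hF : ∀ t, F t = Matrix.of fun i j => NormedSpace.exp (t • M) (Sum.inl i) (Sum.inl j))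
    (hH : ∀ t, H t = Matrix.of fun i j => NormedSpace.exp (t • M) (Sum.inl i) (Sum.inr j))
    (hP : ∀ t, P t = H t * (F t)ᵀ) :
    (∀ t, F t = NormedSpace.exp (t • A)) ∧
    P 0 = 0 ∧
    (∀ t i j, HasDerivAt (fun s => P s i j) ((A * P t + P t * Aᵀ + D) i j) t) := by
  exact lyapunov_master A D hD M hM F H P hF hH hP
end

section
/- Let P : ℝ → Matrix (Fin d) (Fin d) ℝ satisfy P'(t) = A P(t) + P(t) Aᵀ + D with P(t₀) = P₀, where A, D are constant d×d matrices. Then P(t) = exp(A(t−t₀)) P₀ exp(Aᵀ(t−t₀)) + ∫₀^{t−t₀} exp(A s) D exp(Aᵀ s) ds for all t ≥ t₀. -/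
open Matrix MeasureTheory intervalIntegral

/-- Entrywise interval integral of a matrix-valued function. -/
noncomputable def matIntegral {m n : Type*} [Fintype m] [Fintype n]
    (f : ℝ → Matrix m n ℝ) (a b : ℝ) : Matrix m n ℝ :=
  Matrix.of fun i j => ∫ u in a..b, f u i j

attribute [local instance] Matrix.linftyOpNormedAddCommGroup Matrix.linftyOpNormedRing
  Matrix.linftyOpNormedAlgebra

namespace LyapAux

variable {d : ℕ}

noncomputable def entryCLM (i j : Fin d) : Matrix (Fin d) (Fin d) ℝ →L[ℝ] ℝ :=
  LinearMap.toContinuousLinearMap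
    { toFun := fun M => M i j
      map_add' := fun _ _ => rfl
      map_smul' := fun _ _ => rfl }

theorem hasDerivAt_entries {f : ℝ → Matrix (Fin d) (Fin d) ℝ}
    {f' : Matrix (Fin d) (Fin d) ℝ} {t : ℝ} (h : HasDerivAt f f' t) (i j : Fin d) :
    HasDerivAt (fun s => f s i j) (f' i j) t :=
  (entryCLM i j).hasFDerivAt.comp_hasDerivAt t h

theorem hasDerivAt_of_entries {f : ℝ → Matrix (Fin d) (Fin d) ℝ}
    {f' : Matrix (Fin d) (Fin d) ℝ} {t : ℝ}
    (h : ∀ i j, HasDerivAt (fun s => f s i j) (f' i j) t) :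
    HasDerivAt f f' t := by
  have key : ∀ (M : Matrix (Fin d) (Fin d) ℝ),
      M = ∑ i, ∑ j, M i j • Matrix.single i j (1:ℝ) := by
    intro M
    conv_lhs => rw [Matrix.matrix_eq_sum_single M]
    simp [Matrix.smul_single]
  have h2 : HasDerivAt (fun s => ∑ i, ∑ j, f s i j • Matrix.single i j (1:ℝ))
      (∑ i, ∑ j, f' i j • Matrix.single i j (1:ℝ)) t :=
    HasDerivAt.fun_sum fun i _ => HasDerivAt.fun_sum fun j _ => (h i j).smul_const _
  rw [key f']
  exact h2.congr_of_eventuallyEq (Filter.Eventually.of_forall fun s => (key (f s)))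

end LyapAux

/-- The solution of the Lyapunov differential equation
`P' = A P + P Aᵀ + D`, `P(t₀) = P₀`. -/
theorem lyapunov_ode_solution {d : ℕ} (A D P₀ : Matrix (Fin d) (Fin d) ℝ)
    (t₀ : ℝ) (P : ℝ → Matrix (Fin d) (Fin d) ℝ)
    (hderiv : ∀ t i j, HasDerivAt (fun s => P s i j) ((A * P t + P t * Aᵀ + D) i j) t)
    (hinit : P t₀ = P₀) :
    ∀ t, t₀ ≤ t → P t =
      NormedSpace.exp ((t - t₀) • A) * P₀ * NormedSpace.exp ((t - t₀) • Aᵀ) +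
      matIntegral (fun s => NormedSpace.exp (s • A) * D * NormedSpace.exp (s • Aᵀ))
        0 (t - t₀) := by
  intro t ht
  set e : ℝ → Matrix (Fin d) (Fin d) ℝ := fun u => NormedSpace.exp ((t - u) • A) with he_def
  set e' : ℝ → Matrix (Fin d) (Fin d) ℝ := fun u => NormedSpace.exp ((t - u) • Aᵀ) with he'_def
  have hP : ∀ u, HasDerivAt P (A * P u + P u * Aᵀ + D) u := fun u =>
    LyapAux.hasDerivAt_of_entries (fun i j => hderiv u i j)
  have hneg : ∀ u : ℝ, HasDerivAt (fun v : ℝ => t - v) (-1 : ℝ) u := fun u => by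
    simpa using (hasDerivAt_id u).const_sub t
  have he : ∀ u, HasDerivAt e (-(A * e u)) u := fun u => by
    have := (hasDerivAt_exp_smul_const' A (t - u)).scomp u (hneg u)
    rw [neg_one_smul] at this; exact this
  have he' : ∀ u, HasDerivAt e' (-(Aᵀ * e' u)) u := fun u => by
    have := (hasDerivAt_exp_smul_const' Aᵀ (t - u)).scomp u (hneg u)
    rw [neg_one_smul] at this; exact this
  have hcA : ∀ u, e u * A = A * e u := fun u =>
    (hasDerivAt_exp_smul_const A (t - u)).unique (hasDerivAt_exp_smul_const' A (t - u))
  have hcA' : ∀ u, Aᵀ * e' u = e' u * Aᵀ := fun u =>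
    ((hasDerivAt_exp_smul_const Aᵀ (t - u)).unique
      (hasDerivAt_exp_smul_const' Aᵀ (t - u))).symm
  have hF : ∀ u, HasDerivAt (fun v => e v * P v * e' v) (e u * D * e' u) u := by
    intro u
    have h := ((he u).mul (hP u)).mul (he' u)
    refine h.congr_deriv ?_
    symm
    rw [← hcA u, hcA' u]
    noncomm_ring
    rw [hcA' u]
    simp only [Pi.mul_apply, mul_assoc]
    abel
  have cont : Continuous fun u => e u * D * e' u := by
    have c1 : Continuous e := by
      apply NormedSpace.exp_continuous.comp
      exact (continuous_const.sub continuous_id).smul continuous_const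
    have c2 : Continuous e' := by
      apply NormedSpace.exp_continuous.comp
      exact (continuous_const.sub continuous_id).smul continuous_const
    exact (c1.mul continuous_const).mul c2
  have hFTC : ∀ i j, (∫ u in t₀..t, (e u * D * e' u) i j) =
      (e t * P t * e' t) i j - (e t₀ * P t₀ * e' t₀) i j := fun i j =>
    intervalIntegral.integral_eq_sub_of_hasDerivAt
      (fun u _ => LyapAux.hasDerivAt_entries (hF u) i j)
      (((LyapAux.entryCLM i j).continuous.comp cont).intervalIntegrable t₀ t)
  have het : e t = 1 := by simp [he_def, NormedSpace.exp_zero]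
  have he't : e' t = 1 := by simp [he'_def, NormedSpace.exp_zero]
  ext i j
  have hij := hFTC i j
  rw [het, he't, hinit, one_mul, mul_one] at hij
  have hPt : P t i j = (e t₀ * P₀ * e' t₀) i j + ∫ u in t₀..t, (e u * D * e' u) i j := by
    rw [hij]; ring
  have hcv : (∫ u in t₀..t, (e u * D * e' u) i j) =
      ∫ v in (0:ℝ)..(t - t₀),
        (NormedSpace.exp (v • A) * D * NormedSpace.exp (v • Aᵀ)) i j := by
    have := intervalIntegral.integral_comp_sub_left (a := t₀) (b := t)
      (fun v => (NormedSpace.exp (v • A) * D * NormedSpace.exp (v • Aᵀ)) i j) t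
    simpa [he_def, he'_def] using this
  rw [Matrix.add_apply]
  rw [hPt, hcv]
  rfl
end

section
/- Let A₁ (n₁×n₁), A₂ (n₂×n₂) be square matrices and B (n₁×n₂). If the top-right block of exp(s·[[A₁,B],[0,A₂]]) is denoted G(s), then G satisfies the ODE G'(s) = A₁ G(s) + B exp(A₂ s) with G(0) = 0. -/
open Matrix NormedSpace

attribute [local instance] Matrix.linftyOpNormedRing Matrix.linftyOpNormedAlgebra

variable {n₁ n₂ : ℕ}

/-- entry evaluation as a continuous linear map -/
def entryCLM {m n : Type*} (i : m) (j : n) :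
    Matrix m n ℝ →L[ℝ] ℝ :=
  { Matrix.entryLinearMap ℝ ℝ i j with
    cont := (continuous_apply j).comp (continuous_apply i) }

@[simp] lemma entryCLM_apply {m n : Type*} (i : m) (j : n) (X : Matrix m n ℝ) :
    entryCLM i j X = X i j := rfl

lemma pow_blocks (P : Matrix (Fin n₁) (Fin n₁) ℝ) (Q : Matrix (Fin n₁) (Fin n₂) ℝ)
    (R : Matrix (Fin n₂) (Fin n₂) ℝ) (k : ℕ) :
    ∃ C, (fromBlocks P Q 0 R) ^ k = fromBlocks (P ^ k) C 0 (R ^ k) := by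
  induction k with
  | zero => exact ⟨0, by simp [Matrix.fromBlocks_one]⟩
  | succ k ih =>
    obtain ⟨C, hC⟩ := ih
    refine ⟨P ^ k * Q + C * R, ?_⟩
    rw [pow_succ, pow_succ, pow_succ, hC, Matrix.fromBlocks_multiply]
    simp

lemma exp_block_entries (P : Matrix (Fin n₁) (Fin n₁) ℝ) (Q : Matrix (Fin n₁) (Fin n₂) ℝ)
    (R : Matrix (Fin n₂) (Fin n₂) ℝ) :
    (∀ i j, exp (fromBlocks P Q 0 R) (Sum.inr i) (Sum.inl j) = 0) ∧
    (∀ i j, exp (fromBlocks P Q 0 R) (Sum.inr i) (Sum.inr j) = exp R i j) := by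
  have hsum : Summable fun n : ℕ => ((n.factorial : ℝ))⁻¹ • (fromBlocks P Q 0 R) ^ n :=
    expSeries_summable' _
  have hsumR : Summable fun n : ℕ => ((n.factorial : ℝ))⁻¹ • R ^ n := expSeries_summable' _
  constructor
  · intro i j
    have := (entryCLM (Sum.inr i : Fin n₁ ⊕ Fin n₂) (Sum.inl j)).map_tsum hsum
    rw [exp_eq_tsum (𝕂 := ℝ)]
    beta_reduce
    rw [show (∑' n : ℕ, ((n.factorial : ℝ))⁻¹ • (fromBlocks P Q 0 R) ^ n) (Sum.inr i) (Sum.inl j)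
      = entryCLM (Sum.inr i : Fin n₁ ⊕ Fin n₂) (Sum.inl j)
        (∑' n : ℕ, ((n.factorial : ℝ))⁻¹ • (fromBlocks P Q 0 R) ^ n) from rfl, this]
    convert tsum_zero with k
    obtain ⟨C, hC⟩ := pow_blocks P Q R k
    simp [hC, Matrix.smul_apply]
  · intro i j
    have h1 := (entryCLM (Sum.inr i : Fin n₁ ⊕ Fin n₂) (Sum.inr j)).map_tsum hsum
    have h2 := (entryCLM i j).map_tsum hsumR
    rw [exp_eq_tsum (𝕂 := ℝ), exp_eq_tsum (𝕂 := ℝ)]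
    beta_reduce
    rw [show (∑' n : ℕ, ((n.factorial : ℝ))⁻¹ • (fromBlocks P Q 0 R) ^ n) (Sum.inr i) (Sum.inr j)
      = entryCLM (Sum.inr i : Fin n₁ ⊕ Fin n₂) (Sum.inr j)
        (∑' n : ℕ, ((n.factorial : ℝ))⁻¹ • (fromBlocks P Q 0 R) ^ n) from rfl, h1]
    rw [show (∑' n : ℕ, ((n.factorial : ℝ))⁻¹ • R ^ n) i j
      = entryCLM i j (∑' n : ℕ, ((n.factorial : ℝ))⁻¹ • R ^ n) from rfl, h2]
    congr 1
    funext k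
    obtain ⟨C, hC⟩ := pow_blocks P Q R k
    simp [hC, Matrix.smul_apply]

/-- The top-right block `G(s)` of `exp(s·[[A₁,B],[0,A₂]])` satisfies
`G'(s) = A₁ G(s) + B exp(A₂ s)` with `G(0) = 0`. -/
theorem block_exp_top_right_ode {n₁ n₂ : ℕ}
    (A₁ : Matrix (Fin n₁) (Fin n₁) ℝ) (A₂ : Matrix (Fin n₂) (Fin n₂) ℝ)
    (B : Matrix (Fin n₁) (Fin n₂) ℝ)
    (M : Matrix (Fin n₁ ⊕ Fin n₂) (Fin n₁ ⊕ Fin n₂) ℝ)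
    (hM : M = Matrix.fromBlocks A₁ B 0 A₂)
    (G : ℝ → Matrix (Fin n₁) (Fin n₂) ℝ)
    (hG : ∀ s, G s = Matrix.of fun i j => NormedSpace.exp (s • M) (Sum.inl i) (Sum.inr j)) :
    G 0 = 0 ∧
    ∀ s i j, HasDerivAt (fun u => G u i j)
      ((A₁ * G s + B * NormedSpace.exp (s • A₂)) i j) s := by
  constructor
  · ext i j
    simp [hG, Matrix.one_apply]
  intro s i j
  -- s • M as block matrix
  have hsM : ∀ s : ℝ, s • M = fromBlocks (s • A₁) (s • B) 0 (s • A₂) := by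
    intro s; rw [hM, Matrix.fromBlocks_smul, smul_zero]
  have hexp := exp_block_entries (s • A₁) (s • B) (s • A₂)
  -- derivative of u ↦ exp(u • M)
  have hd : HasDerivAt (fun u : ℝ => exp (u • M)) (M * exp (s • M)) s :=
    hasDerivAt_exp_smul_const' M s
  have hd2 : HasDerivAt (fun u : ℝ => exp (u • M) (Sum.inl i) (Sum.inr j))
      ((M * exp (s • M)) (Sum.inl i) (Sum.inr j)) s := by
    have := ((entryCLM (Sum.inl i : Fin n₁ ⊕ Fin n₂) (Sum.inr j)).hasFDerivAt.comp_hasDerivAt s hd)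
    exact this
  have heq : (fun u : ℝ => G u i j) = fun u : ℝ => exp (u • M) (Sum.inl i) (Sum.inr j) := by
    funext u; rw [hG u]; rfl
  rw [heq]
  have key : (A₁ * G s + B * NormedSpace.exp (s • A₂)) i j
      = (M * exp (s • M)) (Sum.inl i) (Sum.inr j) := by
    rw [hM, Matrix.fromBlocks_smul, smul_zero, Matrix.mul_apply, Matrix.add_apply, Matrix.mul_apply, Matrix.mul_apply,
      Fintype.sum_sum_type]
    have e1 : ∀ k, G s k j = exp (fromBlocks (s • A₁) (s • B) 0 (s • A₂)) (Sum.inl k) (Sum.inr j) := by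
      intro k
      simp only [hG s, Matrix.of_apply, hsM s]
    symm
    congr 1
    · refine Finset.sum_congr rfl fun k _ => ?_
      rw [Matrix.fromBlocks_apply₁₁, e1 k]
    · refine Finset.sum_congr rfl fun k _ => ?_
      rw [Matrix.fromBlocks_apply₁₂, hexp.2]
  rw [key]
  exact hd2
end
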